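/- Let M be a deterministic program with high-security input H, low-security input L, and low-security output O, and let μ be a probability distribution on ℍ × 𝕃 with μ(h,ℓ) > 0 for all h ∈ ℍ and ℓ ∈ 𝕃. Then M is non-interferent if and only if GE[μ](M) ≤ 0. -/

import Mathlib

/-!
Statement 2: For a deterministic program `M : ℍ × 𝕃 → 𝕆` and a probability
distribution `μ` on `ℍ × 𝕃` with `μ(h,ℓ) > 0` everywhere, `M` is non-interferent
iff `GE[μ](M) ≤ 0`, where `GE[μ](M) = 𝓖[μ](H|L) − 𝓖[μ](H|O,L)`.
-/

/-- Guessing entropy of a (sub)distribution `p` on a finite type `X`: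
`𝓖(p) = Σ_{1≤i≤m} i · p(x_i)` where `x_1, …, x_m` enumerates `X` so that
`p(x_i) ≥ p(x_j)` whenever `i ≤ j` (obtained by sorting `p` decreasingly). -/
noncomputable def guess {X : Type*} [Fintype X] (p : X → ℝ) : ℝ :=
  ∑ i : Fin (Fintype.card X), ((i : ℕ) + 1 : ℝ) *
    p ((Fintype.equivFin X).symm
      (Tuple.sort (fun j => -p ((Fintype.equivFin X).symm j)) i))

variable {Hi Li Oi : Type*}

/-- Marginal probability `μ(L = ℓ)`. -/
noncomputable def pL [Fintype Hi] (μ : Hi × Li → ℝ) (ℓ : Li) : ℝ := ∑ h, μ (h, ℓ)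

/-- Joint probability `μ(O = o, L = ℓ)` where `O = M(H,L)`. -/
noncomputable def pOL [Fintype Hi] [DecidableEq Oi] (M : Hi × Li → Oi) (μ : Hi × Li → ℝ)
    (o : Oi) (ℓ : Li) : ℝ := ∑ h, if M (h, ℓ) = o then μ (h, ℓ) else 0

/-- Conditional guessing entropy `𝓖[μ](H|L) = Σ_ℓ μ(L=ℓ) · 𝓖[μ](H|L=ℓ)`. -/
noncomputable def condGuessHL [Fintype Hi] [Fintype Li] (μ : Hi × Li → ℝ) : ℝ :=
  ∑ ℓ : Li, pL μ ℓ * guess (fun h : Hi => μ (h, ℓ) / pL μ ℓ)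

/-- Conditional guessing entropy `𝓖[μ](H|O,L)` where `O = M(H,L)`. -/
noncomputable def condGuessHOL [Fintype Hi] [Fintype Li] [Fintype Oi] [DecidableEq Oi]
    (M : Hi × Li → Oi) (μ : Hi × Li → ℝ) : ℝ :=
  ∑ ℓ : Li, ∑ o : Oi, pOL M μ o ℓ *
    guess (fun h : Hi => (if M (h, ℓ) = o then μ (h, ℓ) else 0) / pOL M μ o ℓ)

/-- Guessing-entropy-based quantitative information flow
`GE[μ](M) = 𝓖[μ](H|L) − 𝓖[μ](H|O,L)`. -/
noncomputable def GE [Fintype Hi] [Fintype Li] [Fintype Oi] [DecidableEq Oi]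
    (M : Hi × Li → Oi) (μ : Hi × Li → ℝ) : ℝ :=
  condGuessHL μ - condGuessHOL M μ

section Aux
variable {X : Type*} [Fintype X]

lemma guess_eq_sum_of_antitone (p : X → ℝ) (σ : Equiv.Perm (Fin (Fintype.card X)))
    (hσ : Antitone fun i => p ((Fintype.equivFin X).symm (σ i))) :
    guess p = ∑ i : Fin (Fintype.card X),
      ((i : ℕ) + 1 : ℝ) * p ((Fintype.equivFin X).symm (σ i)) := by
  have hm : Monotone ((fun j => -p ((Fintype.equivFin X).symm j)) ∘ σ) := by
    intro a b hab
    simpa using neg_le_neg (hσ hab)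
  have hc := (Tuple.comp_sort_eq_comp_iff_monotone
    (f := fun j => -p ((Fintype.equivFin X).symm j)) (σ := σ)).mpr hm
  unfold guess
  refine Finset.sum_congr rfl fun i _ => ?_
  have h2 := congrFun hc i
  simp only [Function.comp] at h2
  have : p ((Fintype.equivFin X).symm (σ i)) =
      p ((Fintype.equivFin X).symm
        (Tuple.sort (fun j => -p ((Fintype.equivFin X).symm j)) i)) := by linarith
  rw [this]

lemma antitone_guess_sort (p : X → ℝ) :
    Antitone fun i => p ((Fintype.equivFin X).symm
      (Tuple.sort (fun j => -p ((Fintype.equivFin X).symm j)) i)) := by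
  intro a b hab
  have := Tuple.monotone_sort (fun j => -p ((Fintype.equivFin X).symm j)) hab
  simp only [Function.comp] at this
  linarith

lemma guess_smul (c : ℝ) (hc : 0 ≤ c) (p : X → ℝ) :
    guess (fun x => c * p x) = c * guess p := by
  set s := Tuple.sort (fun j => -p ((Fintype.equivFin X).symm j)) with hs
  have h1 : guess (fun x => c * p x) = ∑ i : Fin (Fintype.card X),
      ((i : ℕ) + 1 : ℝ) * (c * p ((Fintype.equivFin X).symm (s i))) :=
    guess_eq_sum_of_antitone _ s (fun a b hab =>
      mul_le_mul_of_nonneg_left (antitone_guess_sort p hab) hc)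
  have h2 : guess p = ∑ i : Fin (Fintype.card X),
      ((i : ℕ) + 1 : ℝ) * p ((Fintype.equivFin X).symm (s i)) :=
    guess_eq_sum_of_antitone p s (antitone_guess_sort p)
  rw [h1, h2, Finset.mul_sum]
  exact Finset.sum_congr rfl fun i _ => by ring

lemma guess_zero : guess (fun _ : X => (0:ℝ)) = 0 := by simp [guess]

lemma guess_le_sum_perm (q : X → ℝ) (σ : Equiv.Perm (Fin (Fintype.card X))) :
    guess q ≤ ∑ i : Fin (Fintype.card X),
      ((i : ℕ) + 1 : ℝ) * q ((Fintype.equivFin X).symm (σ i)) := by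
  set s := Tuple.sort (fun j => -q ((Fintype.equivFin X).symm j)) with hs
  set v : Fin (Fintype.card X) → ℝ := fun i => q ((Fintype.equivFin X).symm (s i)) with hv
  set w : Fin (Fintype.card X) → ℝ := fun i => ((i : ℕ) + 1 : ℝ) with hw
  have hva : Antitone v := antitone_guess_sort q
  have hanti : Antivary w v := by
    intro i j hij
    have hji : j ≤ i := by
      by_contra hcon
      push_neg at hcon
      exact absurd (hva hcon.le) hij.not_ge
    have h3 : ((j : ℕ) : ℝ) + 1 ≤ ((i : ℕ) : ℝ) + 1 :=
      add_le_add_left (Nat.cast_le.mpr hji) 1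
    exact h3
  have key := hanti.sum_smul_le_sum_smul_comp_perm (σ := σ.trans s.symm)
  have h2 : guess q = ∑ i : Fin (Fintype.card X), w i • v i := by
    rw [guess_eq_sum_of_antitone q s hva]
    simp [hw, hv, smul_eq_mul]
  rw [h2]
  refine key.trans_eq (Finset.sum_congr rfl fun i _ => ?_)
  simp [hv, hw, smul_eq_mul, Equiv.trans_apply]

lemma strictMono_le {m : ℕ} (φ : Fin m → ℕ) (hφ : StrictMono φ) (i : Fin m) :
    (i : ℕ) ≤ φ i := by
  calc (i : ℕ) = (Finset.Iio i).card := (Fin.card_Iio (b := i)).symm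
    _ ≤ (Finset.Iio (φ i)).card := by
        refine Finset.card_le_card_of_injOn φ (fun j hj => ?_) (hφ.injective.injOn)
        simp only [Finset.mem_coe, Finset.mem_Iio] at hj ⊢
        exact hφ hj
    _ = φ i := Nat.card_Iio _

lemma guess_le_sum_of_inj (q : X → ℝ) (hq : ∀ x, 0 ≤ q x) (w : X → ℕ)
    (hw : Function.Injective w) :
    guess q ≤ ∑ x : X, ((w x : ℝ) + 1) * q x := by
  set E := Fintype.equivFin X with hE
  set g : Fin (Fintype.card X) → ℕ := fun i => w (E.symm i) with hg
  set s := Tuple.sort g with hs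
  have hmono : Monotone (g ∘ s) := Tuple.monotone_sort g
  have hinj : Function.Injective (g ∘ s) :=
    (hw.comp E.symm.injective).comp s.injective
  have hsm : StrictMono (g ∘ s) := hmono.strictMono_of_injective hinj
  have hle : ∀ i : Fin (Fintype.card X), (i : ℕ) ≤ g (s i) :=
    strictMono_le (g ∘ s) hsm
  have h1 : ∑ x : X, ((w x : ℝ) + 1) * q x
      = ∑ i : Fin (Fintype.card X), ((g (s i) : ℝ) + 1) * q (E.symm (s i)) :=
    (Fintype.sum_equiv ((s : Equiv.Perm (Fin (Fintype.card X))).trans E.symm)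
      (fun i => ((g (s i) : ℝ) + 1) * q (E.symm (s i)))
      (fun x => ((w x : ℝ) + 1) * q x) (fun i => rfl)).symm
  rw [h1]
  refine (guess_le_sum_perm q s).trans (Finset.sum_le_sum fun i _ => ?_)
  refine mul_le_mul_of_nonneg_right ?_ (hq _)
  have := hle i
  exact add_le_add_left (by exact_mod_cast this) 1

end Aux

lemma core {X O : Type*} [Fintype X] [Fintype O] [DecidableEq O]
    (p : X → ℝ) (hp : ∀ x, 0 < p x) (c : X → O) :
    (∑ o : O, guess (fun x => if c x = o then p x else 0) ≤ guess p) ∧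
    ((∃ x y, c x ≠ c y) →
      ∑ o : O, guess (fun x => if c x = o then p x else 0) < guess p) := by
  classical
  set E := Fintype.equivFin X with hE
  set s := Tuple.sort (fun j => -p (E.symm j)) with hs
  set e : X ≃ Fin (Fintype.card X) := E.trans (s : Equiv.Perm _).symm with he
  set r : X → ℕ := fun x => (e x : ℕ) with hr
  have hrinj : ∀ x y : X, x ≠ y → r x ≠ r y := by
    intro x y hxy hrr
    exact hxy (e.injective (Fin.val_injective hrr))
  have hguessp : guess p = ∑ x : X, ((r x : ℝ) + 1) * p x := by
    rw [guess_eq_sum_of_antitone p s (antitone_guess_sort p)]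
    refine (Fintype.sum_equiv e (fun x => ((r x : ℝ) + 1) * p x)
      (fun i => ((i : ℕ) + 1 : ℝ) * p (E.symm (s i))) fun x => ?_).symm
    have h1 : E.symm (s (e x)) = x := by
      show E.symm (s ((s : Equiv.Perm _).symm (E x))) = x
      rw [Equiv.apply_symm_apply, Equiv.symm_apply_apply]
    show ((r x : ℝ) + 1) * p x = (((e x : ℕ) : ℝ) + 1) * p (E.symm (s (e x)))
    rw [h1]
  have hcard : ∀ x : X, (Finset.univ.filter fun y => r y < r x).card = r x := by
    intro x
    have hb : (Finset.univ.filter fun y => r y < r x).card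
        = (Finset.Iio (e x)).card := by
      refine Finset.card_bij (fun y _ => e y) ?_ ?_ ?_
      · intro y hy
        simp only [Finset.mem_filter] at hy
        exact Finset.mem_Iio.mpr (Fin.lt_def.mpr hy.2)
      · intro y _ z _ hyz
        exact e.injective hyz
      · intro j hj
        refine ⟨e.symm j, ?_, e.apply_symm_apply j⟩
        simp only [Finset.mem_Iio] at hj
        simp only [Finset.mem_filter, Finset.mem_univ, true_and]
        show (e (e.symm j) : ℕ) < (e x : ℕ)
        rw [e.apply_symm_apply]
        exact hj
    rw [hb, Fin.card_Iio]
  have hBle : ∀ x : X,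
      (Finset.univ.filter fun y => c y = c x ∧ r y < r x).card ≤ r x := by
    intro x
    refine le_trans (Finset.card_le_card ?_) (le_of_eq (hcard x))
    intro y hy
    simp only [Finset.mem_filter] at hy ⊢
    exact ⟨hy.1, hy.2.2⟩
  -- the per-class weight functions
  set w : O → X → ℕ := fun o x =>
    if c x = o then (Finset.univ.filter fun y => c y = o ∧ r y < r x).card
    else Fintype.card X + r x with hw
  have hwcardlt : ∀ (o : O) (x : X),
      (Finset.univ.filter fun y => c y = o ∧ r y < r x).card < Fintype.card X := by
    intro o x
    have h1 : (Finset.univ.filter fun y => c y = o ∧ r y < r x).card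
        ≤ (Finset.univ.filter fun y => r y < r x).card := by
      refine Finset.card_le_card ?_
      intro y hy
      simp only [Finset.mem_filter] at hy ⊢
      exact ⟨hy.1, hy.2.2⟩
    have h2 : r x < Fintype.card X := (e x).isLt
    exact lt_of_le_of_lt (h1.trans_eq (hcard x)) h2
  have hkey : ∀ (o : O) (x y : X), c x = o → c y = o → r x < r y →
      (Finset.univ.filter fun z => c z = o ∧ r z < r x).card
        < (Finset.univ.filter fun z => c z = o ∧ r z < r y).card := by
    intro o x y hcx hcy hxy
    refine Finset.card_lt_card ?_
    have hsub : (Finset.univ.filter fun z => c z = o ∧ r z < r x)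
        ⊆ (Finset.univ.filter fun z => c z = o ∧ r z < r y) := by
      intro z hz
      simp only [Finset.mem_filter] at hz ⊢
      exact ⟨hz.1, hz.2.1, hz.2.2.trans hxy⟩
    rw [Finset.ssubset_iff_of_subset hsub]
    refine ⟨x, ?_, ?_⟩
    · simp only [Finset.mem_filter, Finset.mem_univ, true_and]
      exact ⟨hcx, hxy⟩
    · simp only [Finset.mem_filter, Finset.mem_univ, true_and, not_and]
      intro _
      exact lt_irrefl _
  have hwinj : ∀ o : O, Function.Injective (w o) := by
    intro o x y hxy
    by_contra hne
    have hrne := hrinj x y hne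
    simp only [hw] at hxy
    by_cases hcx : c x = o <;> by_cases hcy : c y = o
    · rw [if_pos hcx, if_pos hcy] at hxy
      rcases lt_trichotomy (r x) (r y) with h | h | h
      · exact absurd hxy (Nat.ne_of_lt (hkey o x y hcx hcy h))
      · exact hrne h
      · exact absurd hxy.symm (Nat.ne_of_lt (hkey o y x hcy hcx h))
    · rw [if_pos hcx, if_neg hcy] at hxy
      have := hwcardlt o x
      omega
    · rw [if_neg hcx, if_pos hcy] at hxy
      have := hwcardlt o y
      omega
    · rw [if_neg hcx, if_neg hcy] at hxy
      exact hrne (by omega)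
  have hPo : ∀ o : O, guess (fun x => if c x = o then p x else 0)
      ≤ ∑ x : X, (if c x = o then
          (((Finset.univ.filter fun y => c y = o ∧ r y < r x).card : ℝ) + 1) * p x
        else 0) := by
    intro o
    have h0 : ∀ x : X, 0 ≤ (if c x = o then p x else 0) := by
      intro x
      split
      · exact (hp x).le
      · exact le_refl 0
    refine (guess_le_sum_of_inj _ h0 (w o) (hwinj o)).trans_eq ?_
    refine Finset.sum_congr rfl fun x _ => ?_
    by_cases hcx : c x = o
    · simp only [hw, if_pos hcx]
    · simp only [hw, if_neg hcx, mul_zero]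
  set B : X → ℕ := fun x => (Finset.univ.filter fun y => c y = c x ∧ r y < r x).card with hB
  have hmid : ∑ o : O, guess (fun x => if c x = o then p x else 0)
      ≤ ∑ x : X, ((B x : ℝ) + 1) * p x := by
    refine (Finset.sum_le_sum fun o _ => hPo o).trans_eq ?_
    rw [Finset.sum_comm]
    refine Finset.sum_congr rfl fun x _ => ?_
    rw [Finset.sum_ite_eq Finset.univ (c x) (fun o =>
      (((Finset.univ.filter fun y => c y = o ∧ r y < r x).card : ℝ) + 1) * p x)]
    simp
    exact Or.inl rfl
  have hfinal : ∑ x : X, ((B x : ℝ) + 1) * p x ≤ ∑ x : X, ((r x : ℝ) + 1) * p x := by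
    refine Finset.sum_le_sum fun x _ => ?_
    refine mul_le_mul_of_nonneg_right (add_le_add_left ?_ 1) (hp x).le
    exact_mod_cast hBle x
  constructor
  · exact hmid.trans (hfinal.trans_eq hguessp.symm)
  · rintro ⟨x, y, hxy⟩
    have hne : x ≠ y := fun h => hxy (by rw [h])
    -- find a, b with r b < r a and c b ≠ c a
    obtain ⟨a, b, hba, hcab⟩ : ∃ a b : X, r b < r a ∧ c b ≠ c a := by
      rcases lt_or_gt_of_ne (hrinj x y hne) with h | h
      · exact ⟨y, x, h, hxy⟩
      · exact ⟨x, y, h, fun h' => hxy h'.symm⟩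
    have hstrict : ∑ x : X, ((B x : ℝ) + 1) * p x < ∑ x : X, ((r x : ℝ) + 1) * p x := by
      refine Finset.sum_lt_sum (fun x _ => mul_le_mul_of_nonneg_right
        (add_le_add_left (by exact_mod_cast hBle x) 1) (hp x).le) ⟨a, Finset.mem_univ a, ?_⟩
      have hBa : B a < r a := by
        have hss : (Finset.univ.filter fun y => c y = c a ∧ r y < r a)
            ⊂ (Finset.univ.filter fun y => r y < r a) := by
          have hsub : (Finset.univ.filter fun y => c y = c a ∧ r y < r a)
              ⊆ (Finset.univ.filter fun y => r y < r a) := by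
            intro z hz
            simp only [Finset.mem_filter] at hz ⊢
            exact ⟨hz.1, hz.2.2⟩
          rw [Finset.ssubset_iff_of_subset hsub]
          refine ⟨b, ?_, ?_⟩
          · simp only [Finset.mem_filter, Finset.mem_univ, true_and]
            exact hba
          · simp only [Finset.mem_filter, Finset.mem_univ, true_and, not_and]
            intro h
            exact absurd h hcab
        exact lt_of_lt_of_le (Finset.card_lt_card hss) (le_of_eq (hcard a))
      refine mul_lt_mul_of_pos_right (add_lt_add_left ?_ 1) (hp a)
      exact_mod_cast hBa
    exact lt_of_le_of_lt hmid (hstrict.trans_eq hguessp.symm)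

lemma core_const {X O : Type*} [Fintype X] [Fintype O] [DecidableEq O] [Nonempty X]
    (p : X → ℝ) (c : X → O) (hc : ∀ x y, c x = c y) :
    ∑ o : O, guess (fun x => if c x = o then p x else 0) = guess p := by
  classical
  obtain ⟨x₀⟩ := ‹Nonempty X›
  rw [Finset.sum_eq_single (c x₀)]
  · congr 1
    funext x
    rw [if_pos (hc x x₀)]
  · intro o _ ho
    have hz : (fun x => if c x = o then p x else 0) = fun _ => (0:ℝ) := by
      funext x
      refine if_neg fun h => ho ?_
      rw [← h]
      exact hc x x₀
    rw [hz, guess_zero]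
  · intro h
    exact absurd (Finset.mem_univ _) h


/-- A program is non-interferent iff `GE[μ](M) ≤ 0` (for any everywhere-positive
distribution `μ`). -/
theorem noninterferent_iff_GE_le_zero
    [Fintype Hi] [Fintype Li] [Fintype Oi] [DecidableEq Oi] [Nonempty Hi] [Nonempty Li]
    (M : Hi × Li → Oi) (μ : Hi × Li → ℝ)
    (hpos : ∀ x, 0 < μ x) (hsum : ∑ x, μ x = 1) :
    (∀ (h h' : Hi) (ℓ : Li), M (h, ℓ) = M (h', ℓ)) ↔ GE M μ ≤ 0 := by
  classical
  have hpL : ∀ ℓ : Li, 0 < pL μ ℓ :=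
    fun ℓ => Finset.sum_pos (fun h _ => hpos _) Finset.univ_nonempty
  have hHL : condGuessHL μ = ∑ ℓ : Li, guess (fun h => μ (h, ℓ)) := by
    unfold condGuessHL
    refine Finset.sum_congr rfl fun ℓ _ => ?_
    have h1 : (fun h : Hi => μ (h, ℓ) / pL μ ℓ)
        = fun h => (pL μ ℓ)⁻¹ * μ (h, ℓ) := by
      funext h
      rw [div_eq_inv_mul]
    rw [h1, guess_smul _ (inv_nonneg.mpr (hpL ℓ).le)]
    rw [← mul_assoc, mul_inv_cancel₀ (hpL ℓ).ne', one_mul]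
  have hOL : condGuessHOL M μ = ∑ ℓ : Li, ∑ o : Oi,
      guess (fun h => if M (h, ℓ) = o then μ (h, ℓ) else 0) := by
    unfold condGuessHOL
    refine Finset.sum_congr rfl fun ℓ _ => Finset.sum_congr rfl fun o _ => ?_
    have hnn : ∀ h ∈ Finset.univ, (0:ℝ) ≤ (if M (h, ℓ) = o then μ (h, ℓ) else 0) := by
      intro h _
      split
      · exact (hpos _).le
      · exact le_rfl
    by_cases h0 : pOL M μ o ℓ = 0
    · have h0' : ∑ h : Hi, (if M (h, ℓ) = o then μ (h, ℓ) else 0) = 0 := h0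
      have hz : (fun h : Hi => if M (h, ℓ) = o then μ (h, ℓ) else 0) = fun _ => (0:ℝ) := by
        funext h
        exact (Finset.sum_eq_zero_iff_of_nonneg hnn).mp h0' h (Finset.mem_univ h)
      rw [h0, zero_mul, hz, guess_zero]
    · have hpos' : 0 < pOL M μ o ℓ :=
        lt_of_le_of_ne (Finset.sum_nonneg hnn) (Ne.symm h0)
      have h1 : (fun h : Hi => (if M (h, ℓ) = o then μ (h, ℓ) else 0) / pOL M μ o ℓ)
          = fun h => (pOL M μ o ℓ)⁻¹ * (if M (h, ℓ) = o then μ (h, ℓ) else 0) := by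
        funext h
        rw [div_eq_inv_mul]
      rw [h1, guess_smul _ (inv_nonneg.mpr hpos'.le)]
      rw [← mul_assoc, mul_inv_cancel₀ h0, one_mul]
  have hGE : GE M μ = ∑ ℓ : Li, (guess (fun h => μ (h, ℓ)) -
      ∑ o : Oi, guess (fun h => if M (h, ℓ) = o then μ (h, ℓ) else 0)) := by
    rw [GE, hHL, hOL, ← Finset.sum_sub_distrib]
  constructor
  · intro hni
    rw [hGE]
    rw [Finset.sum_eq_zero fun ℓ _ => by
      rw [core_const (fun h => μ (h, ℓ)) (fun h => M (h, ℓ)) (fun x y => hni x y ℓ), sub_self]]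
  · intro hle
    by_contra hni
    push_neg at hni
    obtain ⟨h, h', ℓ₀, hM⟩ := hni
    have hGEpos : 0 < GE M μ := by
      rw [hGE]
      refine Finset.sum_pos'
        (fun ℓ _ => sub_nonneg.mpr (core (fun h => μ (h, ℓ)) (fun h => hpos _)
          (fun h => M (h, ℓ))).1)
        ⟨ℓ₀, Finset.mem_univ _, ?_⟩
      exact sub_pos.mpr ((core (fun h => μ (h, ℓ₀)) (fun h => hpos _)
        (fun h => M (h, ℓ₀))).2 ⟨h, h', hM⟩)
    linarith
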